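/- Let C be a monoidal category and let A and B be monoid objects in C. Suppose there are morphisms of monoid objects i : A ⟶ B and r : B ⟶ A with i ≫ r = 𝟙_A (a retraction diagram in Mon_ C). If B is separable, then A is separable. -/

import Mathlib

open CategoryTheory MonoidalCategory

/-- A monoid object `A` in a monoidal category is *separable* if its multiplication
`μ : A ⊗ A ⟶ A` admits a section `σ : A ⟶ A ⊗ A` which is a morphism of
`A`-bimodule objects from `A` to the free bimodule `A ⊗ A`. -/
def Mon_.IsSeparable {C : Type*} [Category C] [MonoidalCategory C] (A : Mon C) : Prop :=
  ∃ σ : A.X ⟶ A.X ⊗ A.X,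
    σ ≫ MonObj.mul (X := A.X) = 𝟙 A.X ∧
    MonObj.mul (X := A.X) ≫ σ = (A.X ◁ σ) ≫ (α_ A.X A.X A.X).inv ≫ (MonObj.mul (X := A.X) ▷ A.X) ∧
    MonObj.mul (X := A.X) ≫ σ = (σ ▷ A.X) ≫ (α_ A.X A.X A.X).hom ≫ (A.X ◁ MonObj.mul (X := A.X))

/-- If there is a retraction diagram `A ⟶ B ⟶ A` in `Mon_ C` and `B` is separable,
then `A` is separable. -/
theorem Mon_.IsSeparable.of_retract {C : Type*} [Category C] [MonoidalCategory C]
    {A B : Mon C} (i : A ⟶ B) (r : B ⟶ A) (hir : i ≫ r = 𝟙 A)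
    (hB : Mon_.IsSeparable B) : Mon_.IsSeparable A := by
  obtain ⟨σ, h1, h2, h3⟩ := hB
  have hir' : i.hom ≫ r.hom = 𝟙 A.X := congrArg Mon.Hom.hom hir
  have hi := IsMonHom.mul_hom i.hom
  have hr := IsMonHom.mul_hom r.hom
  have key : (i.hom ▷ B.X) ≫ MonObj.mul (X := B.X) ≫ r.hom = (A.X ◁ r.hom) ≫ MonObj.mul (X := A.X) := by
    rw [hr, MonoidalCategory.tensorHom_def]
    simp only [Category.assoc]
    rw [← comp_whiskerRight_assoc, hir', id_whiskerRight, Category.id_comp]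
  have key' : (B.X ◁ i.hom) ≫ MonObj.mul (X := B.X) ≫ r.hom = (r.hom ▷ A.X) ≫ MonObj.mul (X := A.X) := by
    rw [hr, tensorHom_def']
    simp only [Category.assoc]
    rw [← MonoidalCategory.whiskerLeft_comp_assoc, hir', MonoidalCategory.whiskerLeft_id,
      Category.id_comp]
  refine ⟨i.hom ≫ σ ≫ (r.hom ⊗ₘ r.hom), ?_, ?_, ?_⟩
  · rw [Category.assoc, Category.assoc, ← hr, reassoc_of% h1, hir']
  · trans (A.X ◁ (i.hom ≫ σ)) ≫ (α_ A.X B.X B.X).inv ≫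
      (((A.X ◁ r.hom) ≫ MonObj.mul (X := A.X)) ▷ B.X) ≫ (A.X ◁ r.hom)
    · rw [reassoc_of% hi, reassoc_of% h2, MonoidalCategory.tensorHom_def i.hom i.hom,
        MonoidalCategory.tensorHom_def r.hom r.hom]
      simp only [Category.assoc]
      rw [← MonoidalCategory.whiskerLeft_comp_assoc, ← whisker_exchange_assoc,
        associator_inv_naturality_left_assoc, ← comp_whiskerRight_assoc,
        ← comp_whiskerRight_assoc, Category.assoc, key]
    · rw [MonoidalCategory.tensorHom_def r.hom r.hom]
      simp only [MonoidalCategory.whiskerLeft_comp, Category.assoc]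
      rw [associator_inv_naturality_right_assoc, associator_inv_naturality_middle_assoc,
        whisker_exchange, ← comp_whiskerRight_assoc]
  · trans ((i.hom ≫ σ) ▷ A.X) ≫ (α_ B.X B.X A.X).hom ≫
      (B.X ◁ ((r.hom ▷ A.X) ≫ MonObj.mul (X := A.X))) ≫ (r.hom ▷ A.X)
    · rw [reassoc_of% hi, reassoc_of% h3, tensorHom_def' i.hom i.hom,
        tensorHom_def' r.hom r.hom]
      simp only [Category.assoc]
      rw [← comp_whiskerRight_assoc, whisker_exchange_assoc,
        associator_naturality_right_assoc, ← MonoidalCategory.whiskerLeft_comp_assoc,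
        ← MonoidalCategory.whiskerLeft_comp_assoc, Category.assoc, key']
    · rw [tensorHom_def' r.hom r.hom]
      simp only [comp_whiskerRight, Category.assoc]
      rw [associator_naturality_left_assoc, associator_naturality_middle_assoc,
        ← whisker_exchange, ← MonoidalCategory.whiskerLeft_comp_assoc]
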